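/- If two nonzero vectors v, w are interchanged by a rotation (r v = w and r w = v for some r ∈ D), then α_v(w) = α_w(v). -/
import Mathlib


/-- The ray (half-line) spanned by `v`: all nonnegative multiples of `v`. -/
def Ray' {V : Type*} [AddCommGroup V] [Module ℝ V] (v : V) : Set V :=
  {x | ∃ c : ℝ, 0 ≤ c ∧ x = c • v}

/-- The half-plane `ℝ v + ℝ≥0 w`. -/
def HalfPlane {V : Type*} [AddCommGroup V] [Module ℝ V] (v w : V) : Set V :=
  {x | ∃ a b : ℝ, 0 ≤ b ∧ x = a • v + b • w}

/-- `D` is a rotation group: for any two pairs of (half-plane, ray on its boundary)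
there is exactly one element of `D` mapping the first pair to the second. -/
def IsRotationGroup {V : Type*} [AddCommGroup V] [Module ℝ V]
    (D : Subgroup (V ≃ₗ[ℝ] V)) : Prop :=
  ∀ v w v' w' : V, LinearIndependent ℝ ![v, w] → LinearIndependent ℝ ![v', w'] →
    ∃! d : V ≃ₗ[ℝ] V, d ∈ D ∧
      (d : V ≃ₗ[ℝ] V) '' HalfPlane v w = HalfPlane v' w' ∧
      (d : V ≃ₗ[ℝ] V) '' Ray' v = Ray' v'

/-- `w ⊥ v` : some rotation sends `w` to `-w` and fixes `v`. -/
def Perp {V : Type*} [AddCommGroup V] [Module ℝ V]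
    (D : Subgroup (V ≃ₗ[ℝ] V)) (w v : V) : Prop :=
  ∃ r ∈ D, r w = -w ∧ r v = v

theorem stmt12 {V : Type*} [AddCommGroup V] [Module ℝ V]
    (hdim : Module.finrank ℝ V = 3)
    (D : Subgroup (V ≃ₗ[ℝ] V)) (hD : IsRotationGroup D)
    (v w : V) (hv : v ≠ 0) (hw : w ≠ 0)
    (r : V ≃ₗ[ℝ] V) (hr : r ∈ D) (hrv : r v = w) (hrw : r w = v)
    (rv : V ≃ₗ[ℝ] V) (hrvD : rv ∈ D) (hrv1 : rv v = v)
    (hrv2 : ∀ u : V, Perp D u v → rv u = -u)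
    (rw : V ≃ₗ[ℝ] V) (hrwD : rw ∈ D) (hrw1 : rw w = w)
    (hrw2 : ∀ u : V, Perp D u w → rw u = -u)
    (αv : V →ₗ[ℝ] ℝ) (hαv : ∀ x : V, rv x + x = αv x • v)
    (αw : V →ₗ[ℝ] ℝ) (hαw : ∀ x : V, rw x + x = αw x • w) :
    αv w = αw v := by
  -- αv v = 2, αw w = 2
  have hαvv : αv v = 2 := by
    have h := hαv v
    rw [hrv1] at h
    have : (2 : ℝ) • v = αv v • v := by rw [two_smul]; exact h
    exact (smul_left_injective ℝ hv this).symm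
  have hαww : αw w = 2 := by
    have h := hαw w
    rw [hrw1] at h
    have : (2 : ℝ) • w = αw w • w := by rw [two_smul]; exact h
    exact (smul_left_injective ℝ hw this).symm
  have hrsw : r.symm w = v := by rw [← hrv, r.symm_apply_apply]
  have hrsv : r.symm v = w := by rw [← hrw, r.symm_apply_apply]
  -- the shear t = (r * rv * r⁻¹) * rw
  set γ : V → ℝ := fun x => αv (r.symm (rw x)) - αw x with hγ
  set t : V ≃ₗ[ℝ] V := (r * rv * r⁻¹) * rw with ht
  have hrvx : ∀ x : V, rv x = αv x • v - x := by
    intro x; have := hαv x; linear_combination (norm := abel) this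
  have hrwx : ∀ x : V, rw x = αw x • w - x := by
    intro x; have := hαw x; linear_combination (norm := abel) this
  have htapp : ∀ x : V, t x = x + γ x • w := by
    intro x
    have h1 : t x = αv (r.symm (rw x)) • w - rw x := by
      rw [show t x = r (rv (r.symm (rw x))) from rfl, hrvx, map_sub, map_smul, hrv,
        r.apply_symm_apply]
    rw [h1, hγ]
    simp only [sub_smul]
    have h2 := hαw x
    linear_combination (norm := abel) -h2
  have hγw : γ w = 0 := by
    simp only [hγ, hrw1, hrsw, hαvv, hαww, sub_self]
  -- pick u with ![w, u] linearly independent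
  obtain ⟨u, hu⟩ : ∃ u : V, u ∉ Submodule.span ℝ {w} := by
    by_contra h
    push_neg at h
    have htop : Submodule.span ℝ {w} = ⊤ := Submodule.eq_top_iff'.mpr h
    have h1 : Module.finrank ℝ V = 1 := by
      rw [← finrank_top ℝ V, ← htop, finrank_span_singleton hw]
    omega
  have hun : u ≠ 0 := fun h => hu (h ▸ Submodule.zero_mem _)
  have hwu : LinearIndependent ℝ ![w, u] := by
    rw [linearIndependent_fin2]
    refine ⟨by simpa using hun, fun a ha => ?_⟩
    simp only [Matrix.cons_val_one, Matrix.head_cons, Matrix.cons_val_zero] at ha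
    rcases eq_or_ne a 0 with h0 | h0
    · rw [h0, zero_smul] at ha; exact hw ha.symm
    · apply hu
      have hu' : u = a⁻¹ • w := by rw [← ha, smul_smul, inv_mul_cancel₀ h0, one_smul]
      rw [hu']
      exact Submodule.smul_mem _ _ (Submodule.mem_span_singleton_self w)
  -- t = 1 by uniqueness
  have htD : t ∈ D := mul_mem (mul_mem (mul_mem hr hrvD) (inv_mem hr)) hrwD
  have hthp : (t : V ≃ₗ[ℝ] V) '' HalfPlane w u = HalfPlane w u := by
    ext x
    constructor
    · rintro ⟨y, ⟨a, b, hb, rfl⟩, rfl⟩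
      refine ⟨a + a * γ w + b * γ u, b, hb, ?_⟩
      rw [htapp]
      have : γ (a • w + b • u) = a * γ w + b * γ u := by
        simp only [hγ, map_add, map_smul, smul_eq_mul]; ring
      rw [this, hγw]
      simp only [add_smul, mul_smul]
      module
    · rintro ⟨a, b, hb, rfl⟩
      refine ⟨(a - b * γ u) • w + b • u, ⟨a - b * γ u, b, hb, rfl⟩, ?_⟩
      rw [htapp]
      have : γ ((a - b * γ u) • w + b • u) = (a - b * γ u) * γ w + b * γ u := by
        simp only [hγ, map_add, map_smul, smul_eq_mul]; ring
      rw [this, hγw]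
      module
  have htray : (t : V ≃ₗ[ℝ] V) '' Ray' w = Ray' w := by
    have hfix : ∀ c : ℝ, t (c • w) = c • w := by
      intro c
      rw [htapp]
      have : γ (c • w) = c * γ w := by simp [hγ, smul_eq_mul]; ring
      rw [this, hγw, mul_zero, zero_smul, add_zero]
    ext x
    constructor
    · rintro ⟨y, ⟨c, hc, rfl⟩, rfl⟩
      exact ⟨c, hc, hfix c⟩
    · rintro ⟨c, hc, rfl⟩
      exact ⟨c • w, ⟨c, hc, rfl⟩, hfix c⟩
  obtain ⟨d, _, hd⟩ := hD w u w u hwu hwu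
  have ht1 : t = 1 := by
    rw [hd t ⟨htD, hthp, htray⟩, hd 1 ⟨one_mem D, by simp, by simp⟩]
  -- evaluate at v
  have hγv : γ v = 0 := by
    have h := htapp v
    rw [ht1] at h
    have : γ v • w = 0 := by
      have : v = v + γ v • w := by simpa using h
      linear_combination (norm := abel) this.symm
    rcases smul_eq_zero.mp this with h0 | h0
    · exact h0
    · exact absurd h0 hw
  have key : αv (r.symm (rw v)) = αw v := by
    have := hγv
    simp only [hγ] at this
    linarith
  rw [hrwx v, map_sub, map_smul, hrsw, map_sub, map_smul, hrsv] at key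
  simp only [smul_eq_mul, hαvv] at key
  linarith
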